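/- Suppose the convex hull of S⁺ has nonempty interior in ℝⁿ and let γ ∈ ℝ satisfy 0 ≤ γ < ‖c‖. Then the following are equivalent: (i) K(γ) ∩ D(x⁰) = ∅; (ii) conv(S⁺) ∩ interior(K*(γ)) ≠ ∅; (iii) ‖c − d‖ > γ for every d ∈ D(x⁰). -/

import Mathlib

open scoped RealInnerProductSpace

lemma aux_finset_sum_le {E ι : Type*} [NormedAddCommGroup E] (N : E → ℝ) (hN0 : N 0 = 0)
    (hNadd : ∀ x y, N (x + y) ≤ N x + N y) (s : Finset ι) (f : ι → E) :
    N (∑ i ∈ s, f i) ≤ ∑ i ∈ s, N (f i) := by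
  classical
  induction s using Finset.induction_on with
  | empty => simp [hN0]
  | insert _ _ h ih =>
    rw [Finset.sum_insert h, Finset.sum_insert h]
    exact (hNadd _ _).trans (by linarith)

set_option maxHeartbeats 2000000 in
/-- Equivalence of emptiness of K(γ) ∩ D(x⁰), nonemptiness of
conv(S⁺) ∩ interior(K*(γ)), and strict lower bound γ on ‖c − d‖ over D(x⁰). -/
theorem stmt_0 (n : ℕ) (hn : 1 ≤ n)
    (S : Set (EuclideanSpace ℝ (Fin n))) (hS : S.Nonempty)
    (x0 c : EuclideanSpace ℝ (Fin n))
    (N : EuclideanSpace ℝ (Fin n) → ℝ)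
    (hN0 : ∀ x, N x = 0 ↔ x = 0)
    (hNsmul : ∀ (a : ℝ) (x : EuclideanSpace ℝ (Fin n)), N (a • x) = |a| * N x)
    (hNadd : ∀ x y, N (x + y) ≤ N x + N y)
    (γ : ℝ) (hγ0 : 0 ≤ γ) (hγ : γ < N c)
    (hfull : (interior (convexHull ℝ (S ∪ {x0}))).Nonempty) :
    let D : Set (EuclideanSpace ℝ (Fin n)) := {d | ∀ x ∈ S, ⟪d, x - x0⟫ ≤ 0}
    let K : Set (EuclideanSpace ℝ (Fin n)) := {d | N (c - d) ≤ γ}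
    let Kstar : Set (EuclideanSpace ℝ (Fin n)) := {x | ∀ d ∈ K, ⟪d, x0 - x⟫ ≤ 0}
    ((K ∩ D = ∅) ↔ (convexHull ℝ (S ∪ {x0}) ∩ interior Kstar).Nonempty) ∧
    ((K ∩ D = ∅) ↔ ∀ d ∈ D, γ < N (c - d)) := by
  intro D K Kstar
  classical
  -- Basic properties of N
  have hN0' : N 0 = 0 := (hN0 0).mpr rfl
  have hNneg : ∀ x, N (-x) = N x := fun x => by
    have := hNsmul (-1) x; simpa using this
  have hNnn : ∀ x, 0 ≤ N x := fun x => by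
    have h := hNadd x (-x)
    rw [add_neg_cancel, hN0', hNneg] at h; linarith
  -- Upper bound: N x ≤ C * ‖x‖
  obtain ⟨C, hCpos, hC⟩ : ∃ C > 0, ∀ x : EuclideanSpace ℝ (Fin n), N x ≤ C * ‖x‖ := by
    refine ⟨(∑ i, N (EuclideanSpace.single i (1:ℝ))) + 1, by
      have : 0 ≤ ∑ i, N (EuclideanSpace.single i (1:ℝ)) :=
        Finset.sum_nonneg fun i _ => hNnn _
      linarith, ?_⟩
    intro x
    have hcoord : ∀ i : Fin n, |x i| ≤ ‖x‖ := by
      intro i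
      have h := EuclideanSpace.norm_eq x
      have h2 : Real.sqrt (‖x i‖ ^ 2) ≤ Real.sqrt (∑ j, ‖x j‖ ^ 2) := by
        apply Real.sqrt_le_sqrt
        exact Finset.single_le_sum (f := fun j => ‖x j‖ ^ 2)
          (fun j _ => by positivity) (Finset.mem_univ i)
      rw [Real.sqrt_sq (norm_nonneg _)] at h2
      rw [h]
      simpa [Real.norm_eq_abs] using h2
    have hx : x = ∑ i, x i • EuclideanSpace.single i (1:ℝ) := by
      have := (EuclideanSpace.basisFun (Fin n) ℝ).sum_repr x
      simp only [EuclideanSpace.basisFun_apply, EuclideanSpace.basisFun_repr] at this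
      exact this.symm
    calc N x = N (∑ i, x i • EuclideanSpace.single i (1:ℝ)) := by rw [← hx]
      _ ≤ ∑ i, N (x i • EuclideanSpace.single i (1:ℝ)) :=
          aux_finset_sum_le N hN0' hNadd _ _
      _ = ∑ i, |x i| * N (EuclideanSpace.single i (1:ℝ)) := by
          simp only [hNsmul]
      _ ≤ ∑ i, ‖x‖ * N (EuclideanSpace.single i (1:ℝ)) :=
          Finset.sum_le_sum fun i _ => mul_le_mul_of_nonneg_right (hcoord i) (hNnn _)
      _ = (∑ i, N (EuclideanSpace.single i (1:ℝ))) * ‖x‖ := by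
          rw [Finset.sum_mul]
          exact Finset.sum_congr rfl fun i _ => mul_comm _ _
      _ ≤ ((∑ i, N (EuclideanSpace.single i (1:ℝ))) + 1) * ‖x‖ := by
          have := norm_nonneg x; nlinarith
  -- Continuity of N
  have hNcont : Continuous N := by
    have : LipschitzWith (Real.toNNReal C) N := by
      apply LipschitzWith.of_dist_le_mul
      intro x y
      have h1 : N x ≤ N y + N (x - y) := by
        have := hNadd y (x - y); simpa using this
      have h2 : N y ≤ N x + N (x - y) := by
        have h := hNadd x (y - x)
        have hxy : N (y - x) = N (x - y) := by rw [← neg_sub x y, hNneg]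
        rw [hxy] at h; simpa using h
      have h3 : N (x - y) ≤ C * ‖x - y‖ := hC _
      rw [Real.dist_eq, dist_eq_norm, Real.coe_toNNReal _ hCpos.le]
      rw [abs_le]
      constructor <;> linarith
    exact this.continuous
  -- Lower bound: m * ‖x‖ ≤ N x
  obtain ⟨m, hm0, hmle⟩ : ∃ m > 0, ∀ x : EuclideanSpace ℝ (Fin n), m * ‖x‖ ≤ N x := by
    have hsne : (Metric.sphere (0 : EuclideanSpace ℝ (Fin n)) 1).Nonempty := by
      refine ⟨EuclideanSpace.single ⟨0, hn⟩ (1:ℝ), ?_⟩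
      simp [EuclideanSpace.norm_single]
    obtain ⟨z, hz, hzmin⟩ := (isCompact_sphere (0 : EuclideanSpace ℝ (Fin n)) 1).exists_isMinOn
      hsne hNcont.continuousOn
    have hznorm : ‖z‖ = 1 := by simpa using hz
    have hz0 : z ≠ 0 := fun h => by rw [h] at hznorm; simp at hznorm
    have hNz : 0 < N z := by
      rcases (hNnn z).lt_or_eq with h | h
      · exact h
      · exact absurd ((hN0 z).mp h.symm) hz0
    refine ⟨N z, hNz, fun x => ?_⟩
    by_cases hx : x = 0
    · simp [hx, hN0']
    · have hxn : (0:ℝ) < ‖x‖ := norm_pos_iff.mpr hx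
      have hmem : ‖x‖⁻¹ • x ∈ Metric.sphere (0 : EuclideanSpace ℝ (Fin n)) 1 := by
        simp [norm_smul, abs_of_pos (inv_pos.mpr hxn), inv_mul_cancel₀ hxn.ne']
      have h : N z ≤ N (‖x‖⁻¹ • x) := hzmin hmem
      have heq : N (‖x‖⁻¹ • x) = ‖x‖⁻¹ * N x := by
        rw [hNsmul, abs_of_pos (inv_pos.mpr hxn)]
      rw [heq] at h
      rw [mul_comm]
      calc ‖x‖ * N z ≤ ‖x‖ * (‖x‖⁻¹ * N x) := mul_le_mul_of_nonneg_left h hxn.le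
        _ = N x := by field_simp
  -- Facts about K
  have hcK : c ∈ K := by show N (c - c) ≤ γ; rw [sub_self, hN0']; exact hγ0
  have hKne : K.Nonempty := ⟨c, hcK⟩
  have hK0 : (0 : EuclideanSpace ℝ (Fin n)) ∉ K := by
    intro h
    have h' : N (c - 0) ≤ γ := h
    rw [sub_zero] at h'; linarith
  have hKconv : Convex ℝ K := by
    intro d1 h1 d2 h2 a b ha hb hab
    show N (c - (a • d1 + b • d2)) ≤ γ
    have hcc : c = a • c + b • c := by rw [← add_smul, hab, one_smul]
    have hce : c - (a • d1 + b • d2) = a • (c - d1) + b • (c - d2) := by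
      calc c - (a • d1 + b • d2) = (a • c + b • c) - (a • d1 + b • d2) := by rw [← hcc]
        _ = a • (c - d1) + b • (c - d2) := by rw [smul_sub, smul_sub]; abel
    rw [hce]
    calc N (a • (c - d1) + b • (c - d2)) ≤ N (a • (c - d1)) + N (b • (c - d2)) := hNadd _ _
      _ = a * N (c - d1) + b * N (c - d2) := by
          rw [hNsmul, hNsmul, abs_of_nonneg ha, abs_of_nonneg hb]
      _ ≤ a * γ + b * γ := add_le_add (mul_le_mul_of_nonneg_left h1 ha)
          (mul_le_mul_of_nonneg_left h2 hb)
      _ = γ := by rw [← add_mul, hab, one_mul]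
  have hKclosed : IsClosed K := by
    have hKe : K = (fun d => N (c - d)) ⁻¹' Set.Iic γ := rfl
    rw [hKe]
    exact IsClosed.preimage (hNcont.comp (continuous_const.sub continuous_id)) isClosed_Iic
  have hc0 : c ≠ 0 := fun h => by
    rw [h, hN0'] at hγ; linarith
  set R : ℝ := ‖c‖ + γ / m with hR
  have hRpos : 0 < R := by
    have hc1 : 0 < ‖c‖ := norm_pos_iff.mpr hc0
    have hc2 : 0 ≤ γ / m := div_nonneg hγ0 hm0.le
    rw [hR]; linarith
  have hRbound : ∀ d ∈ K, ‖d‖ ≤ R := by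
    intro d hd
    have h1 : m * ‖c - d‖ ≤ γ := le_trans (hmle _) hd
    have h2 : ‖c - d‖ ≤ γ / m := by
      rw [le_div_iff₀ hm0]; linarith [mul_comm m ‖c - d‖]
    have h3 : ‖d‖ ≤ ‖c‖ + ‖c - d‖ := by
      calc ‖d‖ = ‖c - (c - d)‖ := by congr 1; abel
        _ ≤ ‖c‖ + ‖c - d‖ := norm_sub_le _ _
    rw [hR]; linarith
  have hKcomp : IsCompact K := by
    apply Metric.isCompact_of_isClosed_isBounded hKclosed
    rw [Metric.isBounded_iff_subset_closedBall 0]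
    exact ⟨R, fun d hd => by
      simpa [Metric.mem_closedBall, dist_zero_right] using hRbound d hd⟩
  -- Facts about D
  have hDzero : (0 : EuclideanSpace ℝ (Fin n)) ∈ D := by
    intro x hx; simp
  have hDsmul : ∀ (t : ℝ), 0 ≤ t → ∀ d ∈ D, t • d ∈ D := by
    intro t ht d hd x hx
    rw [real_inner_smul_left]
    exact mul_nonpos_of_nonneg_of_nonpos ht (hd x hx)
  have hDconv : Convex ℝ D := by
    intro d1 h1 d2 h2 a b ha hb hab x hx
    show ⟪a • d1 + b • d2, x - x0⟫ ≤ 0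
    rw [inner_add_left, real_inner_smul_left, real_inner_smul_left]
    have hh1 := h1 x hx; have hh2 := h2 x hx
    nlinarith
  have hDclosed : IsClosed D := by
    have hD : D = ⋂ x ∈ S, {d : EuclideanSpace ℝ (Fin n) | ⟪d, x - x0⟫ ≤ 0} := by
      ext d; simp only [Set.mem_iInter, Set.mem_setOf_eq]; rfl
    rw [hD]
    exact isClosed_biInter fun x _ =>
      isClosed_le (Continuous.inner continuous_id continuous_const) continuous_const
  -- halfspace lemma for convex hull
  have hconvD : ∀ d ∈ D, ∀ x ∈ convexHull ℝ (S ∪ {x0}), ⟪d, x - x0⟫ ≤ 0 := by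
    intro d hd x hx
    have hsub : S ∪ {x0} ⊆ {y : EuclideanSpace ℝ (Fin n) | ⟪d, y⟫ ≤ ⟪d, x0⟫} := by
      rintro y (hy | hy)
      · have h := hd y hy
        rw [inner_sub_right] at h
        exact sub_nonpos.mp h
      · simp only [Set.mem_singleton_iff] at hy
        rw [hy]
        show ⟪d, x0⟫ ≤ ⟪d, x0⟫
        exact le_rfl
    have hcv : Convex ℝ {y : EuclideanSpace ℝ (Fin n) | ⟪d, y⟫ ≤ ⟪d, x0⟫} := by
      intro y1 h1 y2 h2 a b ha hb hab
      show ⟪d, a • y1 + b • y2⟫ ≤ ⟪d, x0⟫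
      have h1' : ⟪d, y1⟫ ≤ ⟪d, x0⟫ := h1
      have h2' : ⟪d, y2⟫ ≤ ⟪d, x0⟫ := h2
      rw [inner_add_right, real_inner_smul_right, real_inner_smul_right]
      have key : a * ⟪d, x0⟫ + b * ⟪d, x0⟫ = ⟪d, x0⟫ := by rw [← add_mul, hab, one_mul]
      linarith [mul_le_mul_of_nonneg_left h1' ha, mul_le_mul_of_nonneg_left h2' hb, key]
    have hmem := convexHull_min hsub hcv hx
    rw [inner_sub_right]
    exact sub_nonpos.mpr hmem
  -- the easy equivalence
  have easy : (K ∩ D = ∅) ↔ ∀ d ∈ D, γ < N (c - d) := by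
    constructor
    · intro h d hd
      by_contra hlt
      push_neg at hlt
      have hmem : d ∈ K ∩ D := ⟨hlt, hd⟩
      rw [h] at hmem
      exact hmem
    · intro h
      apply Set.eq_empty_iff_forall_notMem.mpr
      rintro d ⟨hdK, hdD⟩
      exact absurd hdK (not_le.mpr (h d hdD))
  -- (ii) ⇒ (i)
  have back : (convexHull ℝ (S ∪ {x0}) ∩ interior Kstar).Nonempty → K ∩ D = ∅ := by
    rintro ⟨z, hzconv, hzint⟩
    apply Set.eq_empty_iff_forall_notMem.mpr
    rintro d ⟨hdK, hdD⟩
    have hd0 : d ≠ 0 := fun h => hK0 (h ▸ hdK)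
    have hnd : (0:ℝ) < ‖d‖ := norm_pos_iff.mpr hd0
    obtain ⟨ε, hε, hball⟩ := Metric.isOpen_iff.mp isOpen_interior z hzint
    set e : ℝ := ε / (2 * ‖d‖) with he
    have hepos : 0 < e := by rw [he]; positivity
    have hxmem : z - e • d ∈ Metric.ball z ε := by
      have hdist : dist (z - e • d) z = e * ‖d‖ := by
        rw [dist_eq_norm]
        have h' : z - e • d - z = -(e • d) := by abel
        rw [h', norm_neg, norm_smul, Real.norm_eq_abs, abs_of_pos hepos]
      rw [Metric.mem_ball, hdist, he, div_mul_eq_mul_div, mul_comm,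
        div_lt_iff₀ (by positivity)]
      nlinarith
    have h3 : ⟪d, x0 - (z - e • d)⟫ ≤ 0 := (interior_subset (hball hxmem)) d hdK
    have h4 : x0 - (z - e • d) = (x0 - z) + e • d := by abel
    rw [h4, inner_add_right, real_inner_smul_right] at h3
    have h5 : ⟪d, x0 - z⟫ = -⟪d, z - x0⟫ := by
      rw [← inner_neg_right, neg_sub]
    have h2 := hconvD d hdD z hzconv
    have h6 : (0:ℝ) < ⟪d, d⟫ := by
      rw [real_inner_self_eq_norm_mul_norm]
      exact mul_pos hnd hnd
    rw [h5] at h3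
    nlinarith [mul_pos hepos h6]
  -- (i) ⇒ (ii)
  have fwd : K ∩ D = ∅ → (convexHull ℝ (S ∪ {x0}) ∩ interior Kstar).Nonempty := by
    intro hdisj
    have hdisj' : Disjoint K D := Set.disjoint_iff_inter_eq_empty.mpr hdisj
    obtain ⟨f, u, v, hfK, huv, hfD⟩ :=
      geometric_hahn_banach_compact_closed hKconv hKcomp hDconv hDclosed hdisj'
    have hv0 : v < 0 := by
      have := hfD 0 hDzero; simpa using this
    have hfDnn : ∀ b ∈ D, 0 ≤ f b := by
      intro b hb
      by_contra hneg
      push_neg at hneg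
      have ht : 0 < (v - 1) / f b := div_pos_of_neg_of_neg (by linarith) hneg
      have h := hfD (((v - 1) / f b) • b) (hDsmul _ ht.le b hb)
      rw [map_smul, smul_eq_mul, div_mul_cancel₀ _ hneg.ne] at h
      linarith
    set y : EuclideanSpace ℝ (Fin n) :=
      -((InnerProductSpace.toDual ℝ (EuclideanSpace ℝ (Fin n))).symm f) with hy_def
    have hy : ∀ x, ⟪y, x⟫ = -(f x) := by
      intro x
      rw [hy_def, inner_neg_left, InnerProductSpace.toDual_symm_apply]
    have hyK : ∀ k ∈ K, -v < ⟪y, k⟫ := by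
      intro k hk
      rw [hy]
      have := hfK k hk
      linarith
    have hyD : ∀ d ∈ D, ⟪y, d⟫ ≤ 0 := fun d hd => by
      rw [hy]; linarith [hfDnn d hd]
    -- the cone M over conv S - x0
    set M : Set (EuclideanSpace ℝ (Fin n)) :=
      {w | ∃ t : ℝ, 0 ≤ t ∧ ∃ z ∈ convexHull ℝ S, w = t • (z - x0)} with hM_def
    obtain ⟨s0, hs0⟩ := hS
    have hs0c : s0 ∈ convexHull ℝ S := subset_convexHull ℝ S hs0
    have hM0 : (0 : EuclideanSpace ℝ (Fin n)) ∈ M := ⟨0, le_refl 0, s0, hs0c, by simp⟩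
    have hMsmul : ∀ (t : ℝ), 0 ≤ t → ∀ w ∈ M, t • w ∈ M := by
      rintro t ht w ⟨s, hs, z, hz, rfl⟩
      exact ⟨t * s, mul_nonneg ht hs, z, hz, by rw [smul_smul]⟩
    have hMconv : Convex ℝ M := by
      rintro w1 ⟨t1, ht1, z1, hz1, rfl⟩ w2 ⟨t2, ht2, z2, hz2, rfl⟩ a b ha hb hab
      by_cases hst : a * t1 + b * t2 = 0
      · have h1 : a * t1 = 0 := by nlinarith [mul_nonneg ha ht1, mul_nonneg hb ht2]
        have h2 : b * t2 = 0 := by nlinarith [mul_nonneg ha ht1, mul_nonneg hb ht2]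
        have hzz : a • t1 • (z1 - x0) + b • t2 • (z2 - x0) = 0 := by
          rw [smul_smul, smul_smul, h1, h2]; simp
        rw [hzz]; exact hM0
      · set s : ℝ := a * t1 + b * t2 with hs_def
        have hs : 0 < s := lt_of_le_of_ne (by positivity) (Ne.symm hst)
        refine ⟨s, hs.le, (a * t1 / s) • z1 + (b * t2 / s) • z2, ?_, ?_⟩
        · apply convex_convexHull ℝ S hz1 hz2 (by positivity) (by positivity)
          rw [← add_div, ← hs_def]
          exact div_self hs.ne'
        · have e1 : s * (a * t1 / s) = a * t1 := by field_simp
          have e2 : s * (b * t2 / s) = b * t2 := by field_simp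
          calc a • t1 • (z1 - x0) + b • t2 • (z2 - x0)
              = (a * t1) • z1 + (b * t2) • z2 - (a * t1 + b * t2) • x0 := by
                rw [smul_smul, smul_smul, smul_sub, smul_sub, add_smul]; abel
            _ = s • ((a * t1 / s) • z1 + (b * t2 / s) • z2 - x0) := by
                rw [smul_sub, smul_add, smul_smul, smul_smul, e1, e2, hs_def]
    -- bipolar-style argument: y ∈ closure M
    have hyM : y ∈ closure M := by
      by_contra hyM
      obtain ⟨g, u', hgM, hgy⟩ :=
        geometric_hahn_banach_closed_point hMconv.closure isClosed_closure hyM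
      have hu' : 0 < u' := by
        have := hgM 0 (subset_closure hM0); simpa using this
      have hgnonpos : ∀ w ∈ M, g w ≤ 0 := by
        intro w hw
        by_contra hpos
        push_neg at hpos
        have hmem := hMsmul ((u' + 1) / g w) (le_of_lt (by positivity : (0:ℝ) < (u' + 1) / g w)) w hw
        have hlt := hgM _ (subset_closure hmem)
        rw [map_smul, smul_eq_mul, div_mul_cancel₀ _ hpos.ne'] at hlt
        linarith
      set yg : EuclideanSpace ℝ (Fin n) :=
        (InnerProductSpace.toDual ℝ (EuclideanSpace ℝ (Fin n))).symm g with hyg_def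
      have hyg : ∀ x, ⟪yg, x⟫ = g x := fun x => by
        rw [hyg_def, InnerProductSpace.toDual_symm_apply]
      have hygD : yg ∈ D := by
        intro x hx
        have hxM : x - x0 ∈ M :=
          ⟨1, zero_le_one, x, subset_convexHull ℝ S hx, (one_smul _ _).symm⟩
        rw [hyg]
        exact hgnonpos _ hxM
      have h1 : ⟪y, yg⟫ ≤ 0 := hyD yg hygD
      have h2 : 0 < g y := lt_trans hu' hgy
      rw [← hyg, real_inner_comm] at h2
      linarith
    -- approximate y by an element of M
    obtain ⟨w, hwM, hwy⟩ : ∃ w ∈ M, ‖w - y‖ < -v / R := by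
      obtain ⟨w, hwM, hd⟩ := Metric.mem_closure_iff.mp hyM (-v / R)
        (div_pos (neg_pos.mpr hv0) hRpos)
      exact ⟨w, hwM, by rwa [dist_comm, dist_eq_norm] at hd⟩
    have hwK : ∀ k ∈ K, 0 < ⟪w, k⟫ := by
      intro k hk
      have h1 : -v < ⟪y, k⟫ := hyK k hk
      have h2 : |⟪w - y, k⟫| ≤ ‖w - y‖ * ‖k‖ := abs_real_inner_le_norm _ _
      have h3 : ‖k‖ ≤ R := hRbound k hk
      have h4 : ⟪w, k⟫ = ⟪y, k⟫ + ⟪w - y, k⟫ := by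
        rw [← inner_add_left]; congr 1; abel
      have h5 : ‖w - y‖ * ‖k‖ ≤ (-v / R) * R :=
        mul_le_mul hwy.le h3 (norm_nonneg _) (div_pos (neg_pos.mpr hv0) hRpos).le
      rw [div_mul_cancel₀ _ hRpos.ne'] at h5
      have h7 := neg_abs_le ⟪w - y, k⟫
      rw [h4]
      linarith
    obtain ⟨t, ht, z, hz, hwz⟩ := hwM
    have ht0 : t ≠ 0 := by
      rintro rfl
      have h := hwK c hcK
      rw [hwz] at h
      simp at h
    have htpos : 0 < t := lt_of_le_of_ne ht (Ne.symm ht0)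
    have hzK : ∀ k ∈ K, 0 < ⟪k, z - x0⟫ := by
      intro k hk
      have h := hwK k hk
      rw [hwz, real_inner_smul_left] at h
      have h9 : 0 < ⟪z - x0, k⟫ := by
        by_contra hle
        push_neg at hle
        nlinarith
      rw [real_inner_comm]
      exact h9
    -- z is in the interior of Kstar
    have hcont : ContinuousOn (fun k : EuclideanSpace ℝ (Fin n) => ⟪k, z - x0⟫) K :=
      (Continuous.inner continuous_id continuous_const).continuousOn
    obtain ⟨k0, hk0K, hk0min⟩ := hKcomp.exists_isMinOn hKne hcont
    set m' : ℝ := ⟪k0, z - x0⟫ with hm'_def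
    have hm' : 0 < m' := hzK k0 hk0K
    have hzint : z ∈ interior Kstar := by
      rw [mem_interior]
      refine ⟨Metric.ball z (m' / R), ?_, Metric.isOpen_ball,
        Metric.mem_ball_self (div_pos hm' hRpos)⟩
      intro x hx d hd
      have h1 : m' ≤ ⟪d, z - x0⟫ := hk0min hd
      have h2 : |⟪d, z - x⟫| ≤ ‖d‖ * ‖z - x‖ := abs_real_inner_le_norm _ _
      have h3 : ‖d‖ ≤ R := hRbound d hd
      have h4 : ‖z - x‖ < m' / R := by
        rw [← dist_eq_norm, dist_comm]
        exact Metric.mem_ball.mp hx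
      have h5 : ⟪d, x0 - x⟫ = -⟪d, z - x0⟫ + ⟪d, z - x⟫ := by
        rw [← inner_neg_right, ← inner_add_right]
        congr 1; abel
      have h6 : ‖d‖ * ‖z - x‖ ≤ R * (m' / R) :=
        mul_le_mul h3 h4.le (norm_nonneg _) hRpos.le
      rw [mul_div_cancel₀ _ hRpos.ne'] at h6
      have h7 := le_abs_self ⟪d, z - x⟫
      rw [h5]
      linarith
    exact ⟨z, convexHull_mono Set.subset_union_left hz, hzint⟩
  exact ⟨⟨fwd, back⟩, easy⟩
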